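/- arXiv:1810.02361 — 2 statements merged into one kernel-verified Lean document; each statement's English description precedes it below -/
import Mathlib

section
/- For real s > 1, ζ(s) = 1 + Σ_{q=1}^∞ Σ_{m=2}^∞ ζ(s+q, m), where the double series converges. -/
/-- Riemann zeta as a series (valid for s > 1). -/
noncomputable def zetaR (s : ℝ) : ℝ := ∑' n : ℕ, ((n : ℝ) + 1) ^ (-s)

/-- Hurwitz zeta function (series definition, valid for s > 1, q > 0). -/
noncomputable def hurwitzZetaSeries (s q : ℝ) : ℝ := ∑' k : ℕ, ((k : ℝ) + q) ^ (-s)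

/-- diagonal equiv -/
def diagEquiv : (Σ n : ℕ, Fin (n+1)) ≃ ℕ × ℕ where
  toFun x := (x.2.1, x.1 - x.2.1)
  invFun p := ⟨p.1 + p.2, ⟨p.1, by omega⟩⟩
  left_inv := by
    rintro ⟨n, ⟨i, hi⟩⟩
    dsimp only
    refine Sigma.ext (by dsimp only; omega) ?_
    rw [Fin.heq_ext_iff (by dsimp only; omega)]
  right_inv := by
    rintro ⟨a, b⟩
    simp

lemma diag_comp (f : ℕ → ℝ) :
    (fun p : ℕ × ℕ => f (p.1 + p.2)) ∘ diagEquiv = fun x => f x.1 := by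
  funext x
  rcases x with ⟨n, ⟨i, hi⟩⟩
  simp only [Function.comp, diagEquiv, Equiv.coe_fn_mk]
  congr 1
  omega

lemma diag_sum (f : ℕ → ℝ) (hf : ∀ n, 0 ≤ f n)
    (h : Summable fun n : ℕ => ((n:ℝ)+1) * f n) :
    Summable (fun p : ℕ × ℕ => f (p.1 + p.2)) ∧
      ∑' p : ℕ × ℕ, f (p.1 + p.2) = ∑' n : ℕ, ((n:ℝ)+1) * f n := by
  have hcard : ∀ n : ℕ, ∑' _ : Fin (n+1), f n = ((n:ℝ)+1) * f n := by
    intro n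
    rw [tsum_fintype]
    simp [Finset.sum_const, nsmul_eq_mul]
  have hsig : Summable (fun x : Σ n : ℕ, Fin (n+1) => f x.1) := by
    apply (summable_sigma_of_nonneg (fun x => hf _)).2
    constructor
    · intro n; exact Summable.of_finite
    · simpa only [hcard] using h
  have hsum : Summable (fun p : ℕ × ℕ => f (p.1 + p.2)) := by
    rw [← diagEquiv.summable_iff]
    rw [diag_comp f]
    exact hsig
  refine ⟨hsum, ?_⟩
  rw [← diagEquiv.tsum_eq (fun p : ℕ × ℕ => f (p.1 + p.2))]
  have hc : (fun x : Σ n : ℕ, Fin (n+1) => f ((diagEquiv x).1 + (diagEquiv x).2)) =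
      fun x => f x.1 := diag_comp f
  calc ∑' x : Σ n : ℕ, Fin (n+1), f ((diagEquiv x).1 + (diagEquiv x).2)
      = ∑' x : Σ n : ℕ, Fin (n+1), f x.1 := by rw [hc]
    _ = ∑' n, ∑' _ : Fin (n+1), f n := Summable.tsum_sigma hsig
    _ = ∑' n : ℕ, ((n:ℝ)+1) * f n := by simp only [hcard]

lemma summable_shift2 {r : ℝ} (hr : 1 < r) : Summable fun n : ℕ => ((n:ℝ)+2)^(-r) := by
  have h1 : Summable fun n : ℕ => ((n:ℝ))^(-r) :=
    Real.summable_nat_rpow.mpr (by linarith)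
  have h2 := h1.comp_injective (add_left_injective 2)
  apply h2.congr
  intro n
  simp only [Function.comp]
  push_cast
  ring_nf

lemma summable_mul_shift2 {t : ℝ} (ht : 2 < t) :
    Summable fun n : ℕ => ((n:ℝ)+1) * ((n:ℝ)+2)^(-t) := by
  refine Summable.of_nonneg_of_le (fun n => by positivity) (fun n => ?_)
    (summable_shift2 (r := t-1) (by linarith))
  have hb : (0:ℝ) < (n:ℝ)+2 := by positivity
  have h1 : ((n:ℝ)+2)^(-(t-1)) = ((n:ℝ)+2) * ((n:ℝ)+2)^(-t) := by
    rw [show -(t-1) = 1 + (-t) by ring, Real.rpow_add hb, Real.rpow_one]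
  rw [h1]
  have h2 : (0:ℝ) ≤ ((n:ℝ)+2)^(-t) := Real.rpow_nonneg hb.le _
  nlinarith

/-- geometric sum in the exponent -/
lemma geo_exp (s : ℝ) (x : ℝ) (hx : 2 ≤ x) :
    ∑' q : ℕ, x ^ (-(s + ((q:ℝ)+1))) = x^(-s) * (x-1)⁻¹ := by
  have hx0 : (0:ℝ) < x := by linarith
  have hinv : x⁻¹ < 1 := by
    rw [inv_lt_one_iff₀]; right; linarith
  have hstep : ∀ q : ℕ, x ^ (-(s + ((q:ℝ)+1))) = x^(-(s+1)) * (x⁻¹)^q := by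
    intro q
    rw [show -(s + ((q:ℝ)+1)) = -(s+1) + (-(q:ℝ)) by ring, Real.rpow_add hx0]
    congr 1
    rw [Real.rpow_neg hx0.le, Real.rpow_natCast, ← inv_pow]
  calc ∑' q : ℕ, x ^ (-(s + ((q:ℝ)+1)))
      = ∑' q : ℕ, x^(-(s+1)) * (x⁻¹)^q := by simp only [hstep]
    _ = x^(-(s+1)) * (1 - x⁻¹)⁻¹ := by
        rw [tsum_mul_left, tsum_geometric_of_lt_one (by positivity) hinv]
    _ = x^(-s) * (x-1)⁻¹ := by
        have h1 : (1 - x⁻¹) = (x-1) * x⁻¹ := by field_simp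
        rw [h1, mul_inv, inv_inv, show x^(-s) = x^(-(s+1)) * x by
          rw [show -s = -(s+1) + 1 by ring, Real.rpow_add hx0, Real.rpow_one]]
        ring
    
/-- ζ(s) = 1 + Σ_{q≥1} Σ_{m≥2} ζ(s+q,m), the double series converging. -/
theorem zeta_eq_one_add_double_sum (s : ℝ) (hs : 1 < s) :
    Summable (fun p : ℕ × ℕ => hurwitzZetaSeries (s + ((p.1 : ℝ) + 1)) ((p.2 : ℝ) + 2)) ∧
    zetaR s = 1 + ∑' q : ℕ, ∑' m : ℕ,
        hurwitzZetaSeries (s + ((q : ℝ) + 1)) ((m : ℝ) + 2) := by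
  set t : ℕ → ℝ := fun q => s + ((q:ℝ)+1) with ht_def
  have ht2 : ∀ q : ℕ, 2 < t q := by
    intro q
    have : (0:ℝ) ≤ (q:ℝ) := Nat.cast_nonneg q
    simp only [ht_def]; linarith
  -- the triple-sum function
  set G : ℕ × ℕ × ℕ → ℝ := fun x => (((x.2.1 + x.2.2 : ℕ):ℝ)+2)^(-(t x.1)) with hG_def
  have hGnn : ∀ x, 0 ≤ G x := fun x => Real.rpow_nonneg (by positivity) _
  -- per-q diagonal sums
  have hdiag : ∀ q : ℕ, Summable (fun p : ℕ × ℕ => G (q, p)) ∧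
      ∑' p : ℕ × ℕ, G (q, p) = ∑' n : ℕ, ((n:ℝ)+1) * ((n:ℝ)+2)^(-(t q)) :=
    fun q => diag_sum (fun n => ((n:ℝ)+2)^(-(t q))) (fun n => by positivity)
      (summable_mul_shift2 (ht2 q))
  -- the A-sequence and its summability
  set A : ℕ → ℝ := fun q => ∑' n : ℕ, ((n:ℝ)+1) * ((n:ℝ)+2)^(-(t q)) with hA_def
  set C : ℝ := ∑' n : ℕ, ((n:ℝ)+1) * ((n:ℝ)+2)^(-(s+1)) with hC_def
  have hCsumm : Summable fun n : ℕ => ((n:ℝ)+1) * ((n:ℝ)+2)^(-(s+1)) :=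
    summable_mul_shift2 (by linarith)
  have hAle : ∀ q : ℕ, A q ≤ C * (2⁻¹:ℝ)^q := by
    intro q
    have hterm : ∀ n : ℕ, ((n:ℝ)+1) * ((n:ℝ)+2)^(-(t q)) ≤
        (((n:ℝ)+1) * ((n:ℝ)+2)^(-(s+1))) * (2⁻¹:ℝ)^q := by
      intro n
      have hb : (0:ℝ) < (n:ℝ)+2 := by positivity
      have hsplit : ((n:ℝ)+2)^(-(t q)) = ((n:ℝ)+2)^(-(s+1)) * (((n:ℝ)+2)⁻¹)^q := by
        rw [show -(t q) = -(s+1) + (-(q:ℝ)) by simp only [ht_def]; ring,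
          Real.rpow_add hb]
        congr 1
        rw [Real.rpow_neg hb.le, Real.rpow_natCast, ← inv_pow]
      rw [hsplit, ← mul_assoc]
      have hle : (((n:ℝ)+2)⁻¹)^q ≤ (2⁻¹:ℝ)^q := by
        apply pow_le_pow_left₀ (by positivity)
        apply inv_anti₀ (by norm_num)
        have : (0:ℝ) ≤ (n:ℝ) := Nat.cast_nonneg n
        linarith
      exact mul_le_mul_of_nonneg_left hle (by positivity)
    calc A q ≤ ∑' n : ℕ, (((n:ℝ)+1) * ((n:ℝ)+2)^(-(s+1))) * (2⁻¹:ℝ)^q :=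
        Summable.tsum_le_tsum hterm (summable_mul_shift2 (ht2 q)) (hCsumm.mul_right _)
      _ = C * (2⁻¹:ℝ)^q := by rw [tsum_mul_right]
  have hAsum : Summable A := by
    refine Summable.of_nonneg_of_le (fun q => tsum_nonneg (fun n => by positivity))
      hAle ?_
    exact (summable_geometric_of_lt_one (by norm_num) (by norm_num)).mul_left C
  -- summability of the triple sum
  have hG : Summable G := by
    apply (summable_prod_of_nonneg hGnn).2
    refine ⟨fun q => (hdiag q).1, ?_⟩
    apply hAsum.congr
    intro q
    exact ((hdiag q).2).symm
  -- rewrite hurwitz as inner sum of G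
  have hw : ∀ q m : ℕ, hurwitzZetaSeries (s + ((q:ℝ) + 1)) ((m:ℝ) + 2) =
      ∑' k : ℕ, G (q, (m, k)) := by
    intro q m
    unfold hurwitzZetaSeries
    congr 1
    funext k
    simp only [hG_def, ht_def]
    push_cast
    ring_nf
  -- the associated & swapped versions
  have hG' : Summable (fun y : (ℕ × ℕ) × ℕ => G (y.1.1, (y.1.2, y.2))) := by
    have := (Equiv.prodAssoc ℕ ℕ ℕ).summable_iff.2 hG
    exact this.congr (fun y => rfl)
  -- Part 1
  have part1 : Summable (fun p : ℕ × ℕ =>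
      hurwitzZetaSeries (s + ((p.1 : ℝ) + 1)) ((p.2 : ℝ) + 2)) := by
    apply hG'.prod.congr
    intro p
    exact (hw p.1 p.2).symm
  refine ⟨part1, ?_⟩
  -- Part 2: value computation
  have hswap : Summable (fun y : (ℕ × ℕ) × ℕ => G (y.2, y.1)) := hG.prod_symm
  -- double sum = triple tsum
  have step1 : ∑' q : ℕ, ∑' m : ℕ, hurwitzZetaSeries (s + ((q:ℝ) + 1)) ((m:ℝ) + 2)
      = ∑' x, G x := by
    rw [Summable.tsum_prod hG]
    congr 1
    funext q
    rw [Summable.tsum_prod (hdiag q).1]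
    congr 1
    funext m
    exact hw q m
  -- swap order
  have step2 : ∑' x, G x = ∑' p : ℕ × ℕ, ∑' q : ℕ, G (q, p) := by
    have h2 : ∑' y : (ℕ × ℕ) × ℕ, G (y.2, y.1) = ∑' x, G x :=
      (Equiv.prodComm (ℕ × ℕ) ℕ).tsum_eq G
    rw [← h2, Summable.tsum_prod hswap]
  -- inner geometric sum
  have step3 : ∀ p : ℕ × ℕ, ∑' q : ℕ, G (q, p) =
      (((p.1 + p.2 : ℕ):ℝ)+2)^(-s) * (((p.1 + p.2 : ℕ):ℝ)+1)⁻¹ := by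
    intro p
    have hx : (2:ℝ) ≤ ((p.1 + p.2 : ℕ):ℝ)+2 := by
      have : (0:ℝ) ≤ ((p.1 + p.2 : ℕ):ℝ) := Nat.cast_nonneg _
      linarith
    have := geo_exp s (((p.1 + p.2 : ℕ):ℝ)+2) hx
    simp only [hG_def, ht_def]
    rw [this]
    ring_nf
  -- diagonal count for the final sum
  have hfin : Summable (fun n : ℕ => ((n:ℝ)+1) *
      (((n:ℝ)+2)^(-s) * ((n:ℝ)+1)⁻¹)) := by
    apply (summable_shift2 hs).congr
    intro n
    have h1 : ((n:ℝ)+1) ≠ 0 := by positivity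
    field_simp
  have hdiag2 := diag_sum (fun n : ℕ => ((n:ℝ)+2)^(-s) * ((n:ℝ)+1)⁻¹)
    (fun n => by positivity) hfin
  have step4 : ∑' p : ℕ × ℕ, ∑' q : ℕ, G (q, p) = ∑' n : ℕ, ((n:ℝ)+2)^(-s) := by
    calc ∑' p : ℕ × ℕ, ∑' q : ℕ, G (q, p)
        = ∑' p : ℕ × ℕ, (((p.1 + p.2 : ℕ):ℝ)+2)^(-s) * (((p.1 + p.2 : ℕ):ℝ)+1)⁻¹ := by
          congr 1; funext p; exact step3 p
      _ = ∑' n : ℕ, ((n:ℝ)+1) * (((n:ℝ)+2)^(-s) * ((n:ℝ)+1)⁻¹) := hdiag2.2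
      _ = ∑' n : ℕ, ((n:ℝ)+2)^(-s) := by
          congr 1; funext n
          have h1 : ((n:ℝ)+1) ≠ 0 := by positivity
          field_simp
  -- zetaR splits off first term
  have hzsum : Summable fun n : ℕ => ((n:ℝ)+1)^(-s) := by
    have h1 : Summable fun n : ℕ => ((n:ℝ))^(-s) :=
      Real.summable_nat_rpow.mpr (by linarith)
    have h2 := h1.comp_injective (add_left_injective 1)
    apply h2.congr
    intro n
    simp only [Function.comp]
    push_cast
    ring_nf
  have hzeta : zetaR s = 1 + ∑' n : ℕ, ((n:ℝ)+2)^(-s) := by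
    unfold zetaR
    rw [Summable.tsum_eq_zero_add hzsum]
    norm_num
    congr 1
    funext n
    push_cast
    ring_nf
  rw [hzeta, step1, step2, step4]
end

section
/- For every integer t ≥ 1, ζ(2t) = 1 + Σ_{n=t}^∞ Σ_{m=2}^∞ ζ(2n+1, m) + Σ_{n=t}^∞ Σ_{m=2}^∞ ζ(2n+2, m). -/
open scoped ENNReal NNReal

/-- Summability of a nonnegative real family from finiteness of the `ENNReal` sum. -/
lemma summable_of_ofReal_tsum_ne_top {α : Type*} {f : α → ℝ} (hf : ∀ n, 0 ≤ f n)
    (h : (∑' n, ENNReal.ofReal (f n)) ≠ ∞) : Summable f := by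
  lift f to α → ℝ≥0 using hf with g
  simp only [ENNReal.ofReal_coe_nnreal] at h
  exact NNReal.summable_coe.mpr (ENNReal.tsum_coe_ne_top_iff_summable.mp h)

/-- Geometric series for `rpow`. -/
lemma geom_rpow {x : ℝ} (σ : ℝ) (hx : 2 ≤ x) :
    Summable (fun q : ℕ => x ^ (-(σ + q + 1))) ∧
      (∑' q : ℕ, x ^ (-(σ + q + 1))) = x ^ (-σ) / (x - 1) := by
  have hx0 : (0 : ℝ) < x := by linarith
  have hinv0 : (0 : ℝ) ≤ x⁻¹ := by positivity
  have hinv1 : x⁻¹ < 1 := by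
    rw [inv_lt_one_iff₀]; right; linarith
  have key : ∀ q : ℕ, x ^ (-(σ + q + 1)) = x ^ (-σ) * x⁻¹ * (x⁻¹) ^ q := by
    intro q
    have e1 : x ^ (-((q : ℝ))) = (x⁻¹) ^ q := by
      rw [Real.rpow_neg hx0.le, Real.rpow_natCast, inv_pow]
    have e2 : x ^ (-(1 : ℝ)) = x⁻¹ := Real.rpow_neg_one x
    rw [show -(σ + (q : ℝ) + 1) = -σ + -(1 : ℝ) + -((q : ℝ)) by ring,
      Real.rpow_add hx0, Real.rpow_add hx0, e1, e2]
  constructor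
  · exact Summable.congr ((summable_geometric_of_lt_one hinv0 hinv1).mul_left
      (x ^ (-σ) * x⁻¹)) (fun q => (key q).symm)
  · calc (∑' q : ℕ, x ^ (-(σ + q + 1)))
        = ∑' q : ℕ, x ^ (-σ) * x⁻¹ * (x⁻¹) ^ q := tsum_congr key
      _ = x ^ (-σ) * x⁻¹ * (1 - x⁻¹)⁻¹ := by
          rw [tsum_mul_left, tsum_geometric_of_lt_one hinv0 hinv1]
      _ = x ^ (-σ) / (x - 1) := by
          have hxne : x ≠ 0 := hx0.ne'
          have h1 : 1 - x⁻¹ ≠ 0 := by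
            intro h; rw [sub_eq_zero] at h
            exact absurd hinv1 (by rw [← h]; exact lt_irrefl 1)
          have h2 : x - 1 ≠ 0 := by intro h; rw [sub_eq_zero] at h; linarith
          field_simp

/-- Diagonal rearrangement in `ℝ≥0∞`. -/
lemma tsum_prod_diag (f : ℕ → ℝ≥0∞) :
    (∑' p : ℕ × ℕ, f (p.1 + p.2)) = ∑' j : ℕ, (j + 1 : ℕ) * f j := by
  rw [← Finset.HasAntidiagonal.sigmaAntidiagonalEquivProd.tsum_eq (fun p : ℕ × ℕ => f (p.1 + p.2)),
    ENNReal.tsum_sigma']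
  refine tsum_congr fun n => ?_
  have h1 : ∀ b : (Finset.HasAntidiagonal.antidiagonal n : Finset (ℕ × ℕ)),
      f ((Finset.HasAntidiagonal.sigmaAntidiagonalEquivProd ⟨n, b⟩).1 +
        (Finset.HasAntidiagonal.sigmaAntidiagonalEquivProd ⟨n, b⟩).2) = f n := by
    rintro ⟨⟨a, b⟩, hb⟩
    simp only [Finset.HasAntidiagonal.sigmaAntidiagonalEquivProd_apply]
    rw [Finset.HasAntidiagonal.mem_antidiagonal.mp hb]
  calc (∑' b : (Finset.HasAntidiagonal.antidiagonal n : Finset (ℕ × ℕ)),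
        f ((Finset.HasAntidiagonal.sigmaAntidiagonalEquivProd ⟨n, b⟩).1 +
          (Finset.HasAntidiagonal.sigmaAntidiagonalEquivProd ⟨n, b⟩).2))
      = ∑' _b : (Finset.HasAntidiagonal.antidiagonal n : Finset (ℕ × ℕ)), f n := tsum_congr h1
    _ = ∑ _b ∈ Finset.HasAntidiagonal.antidiagonal n, f n :=
        Finset.tsum_subtype (Finset.HasAntidiagonal.antidiagonal n) (fun _ => f n)
    _ = (n + 1 : ℕ) * f n := by
        rw [Finset.sum_const, Finset.Nat.card_antidiagonal, nsmul_eq_mul]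

/-- For t ≥ 1, ζ(2t) = 1 + Σ_{n≥t} Σ_{m≥2} ζ(2n+1,m) + Σ_{n≥t} Σ_{m≥2} ζ(2n+2,m). -/
theorem zeta_even_split (t : ℕ) (ht : 1 ≤ t) :
    zetaR (2 * (t : ℝ))
      = 1 + (∑' n : ℕ, ∑' m : ℕ,
              hurwitzZetaSeries (2 * ((n : ℝ) + t) + 1) ((m : ℝ) + 2))
          + ∑' n : ℕ, ∑' m : ℕ,
              hurwitzZetaSeries (2 * ((n : ℝ) + t) + 2) ((m : ℝ) + 2) := by
  classical
  set σ : ℝ := 2 * (t : ℝ) with hσ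
  have ht1 : (1 : ℝ) ≤ (t : ℝ) := by exact_mod_cast ht
  have hσ1 : (1 : ℝ) < σ := by rw [hσ]; linarith
  have hb : ∀ m k : ℕ, (2 : ℝ) ≤ (k : ℝ) + ((m : ℝ) + 2) := by
    intro m k
    have h1 : (0 : ℝ) ≤ (k : ℝ) := Nat.cast_nonneg k
    have h2 : (0 : ℝ) ≤ (m : ℝ) := Nat.cast_nonneg m
    linarith
  have hbpos : ∀ m k : ℕ, (0 : ℝ) ≤ (k : ℝ) + ((m : ℝ) + 2) := by
    intro m k; linarith [hb m k]
  -- abbreviation for the inner double sums at a shifted exponent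
  set a : ℕ → ℝ≥0∞ := fun N =>
    ∑' m : ℕ, ∑' k : ℕ, ENNReal.ofReal (((k : ℝ) + ((m : ℝ) + 2)) ^ (-(σ + N))) with ha
  set A : ℝ≥0∞ := ∑' n : ℕ, ∑' m : ℕ, ∑' k : ℕ,
    ENNReal.ofReal (((k : ℝ) + ((m : ℝ) + 2)) ^ (-(2 * ((n : ℝ) + t) + 1))) with hAdef
  set B : ℝ≥0∞ := ∑' n : ℕ, ∑' m : ℕ, ∑' k : ℕ,
    ENNReal.ofReal (((k : ℝ) + ((m : ℝ) + 2)) ^ (-(2 * ((n : ℝ) + t) + 2))) with hBdef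
  set Z : ℝ≥0∞ := ∑' j : ℕ, ENNReal.ofReal (((j : ℝ) + 1) ^ (-σ)) with hZdef
  have hA : A = ∑' n : ℕ, a (2 * n + 1) := by
    simp only [hAdef, ha]
    refine tsum_congr fun n => tsum_congr fun m => tsum_congr fun k => ?_
    have he : -(2 * ((n : ℝ) + t) + 1) = -(σ + ((2 * n + 1 : ℕ) : ℝ)) := by
      rw [hσ]; push_cast; ring
    rw [he]
  have hB : B = ∑' n : ℕ, a (2 * n + 2) := by
    simp only [hBdef, ha]
    refine tsum_congr fun n => tsum_congr fun m => tsum_congr fun k => ?_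
    have he : -(2 * ((n : ℝ) + t) + 2) = -(σ + ((2 * n + 2 : ℕ) : ℝ)) := by
      rw [hσ]; push_cast; ring
    rw [he]
  have hAB : (∑' n : ℕ, a (2 * n + 1)) + (∑' n : ℕ, a (2 * n + 2))
      = ∑' q : ℕ, a (q + 1) := by
    have h := tsum_even_add_odd (f := fun q : ℕ => a (q + 1))
      ENNReal.summable ENNReal.summable
    have e : ∀ k : ℕ, 2 * k + 1 + 1 = 2 * k + 2 := fun k => rfl
    simpa only [e] using h
  have hq : (∑' q : ℕ, a (q + 1)) = ∑' m : ℕ, ∑' k : ℕ,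
      ENNReal.ofReal ((((k : ℝ) + ((m : ℝ) + 2)) ^ (-σ)) / (((k : ℝ) + ((m : ℝ) + 2)) - 1)) := by
    simp only [ha]
    rw [ENNReal.tsum_comm]
    refine tsum_congr fun m => ?_
    rw [ENNReal.tsum_comm]
    refine tsum_congr fun k => ?_
    have hx : (2 : ℝ) ≤ (k : ℝ) + ((m : ℝ) + 2) := hb m k
    obtain ⟨hsum, hval⟩ := geom_rpow σ hx
    have hnn : ∀ q : ℕ, 0 ≤ ((k : ℝ) + ((m : ℝ) + 2)) ^ (-(σ + q + 1)) :=
      fun q => Real.rpow_nonneg (hbpos m k) _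
    calc (∑' q : ℕ, ENNReal.ofReal (((k : ℝ) + ((m : ℝ) + 2)) ^ (-(σ + ((q + 1 : ℕ) : ℝ)))))
        = ∑' q : ℕ, ENNReal.ofReal (((k : ℝ) + ((m : ℝ) + 2)) ^ (-(σ + q + 1))) := by
          refine tsum_congr fun q => ?_
          have : -(σ + ((q + 1 : ℕ) : ℝ)) = -(σ + q + 1) := by push_cast; ring
          rw [this]
      _ = ENNReal.ofReal (∑' q : ℕ, ((k : ℝ) + ((m : ℝ) + 2)) ^ (-(σ + q + 1))) :=
          (ENNReal.ofReal_tsum_of_nonneg hnn hsum).symm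
      _ = ENNReal.ofReal ((((k : ℝ) + ((m : ℝ) + 2)) ^ (-σ)) / (((k : ℝ) + ((m : ℝ) + 2)) - 1)) := by
          rw [hval]
  set h : ℕ → ℝ≥0∞ := fun j => ENNReal.ofReal ((((j : ℝ) + 2) ^ (-σ)) / ((j : ℝ) + 1))
    with hhdef
  have hdiag : (∑' m : ℕ, ∑' k : ℕ,
      ENNReal.ofReal ((((k : ℝ) + ((m : ℝ) + 2)) ^ (-σ)) / (((k : ℝ) + ((m : ℝ) + 2)) - 1)))
      = ∑' j : ℕ, ENNReal.ofReal (((j : ℝ) + 2) ^ (-σ)) := by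
    have h0 : ∀ m k : ℕ,
        ENNReal.ofReal ((((k : ℝ) + ((m : ℝ) + 2)) ^ (-σ)) / (((k : ℝ) + ((m : ℝ) + 2)) - 1))
        = h (m + k) := by
      intro m k
      simp only [hhdef]
      have hx : (k : ℝ) + ((m : ℝ) + 2) = ((m + k : ℕ) : ℝ) + 2 := by push_cast; ring
      rw [hx]
      congr 1
      ring_nf
    calc (∑' m : ℕ, ∑' k : ℕ,
        ENNReal.ofReal ((((k : ℝ) + ((m : ℝ) + 2)) ^ (-σ)) / (((k : ℝ) + ((m : ℝ) + 2)) - 1)))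
        = ∑' m : ℕ, ∑' k : ℕ, h (m + k) :=
          tsum_congr fun m => tsum_congr fun k => h0 m k
      _ = ∑' p : ℕ × ℕ, h (p.1 + p.2) :=
          (ENNReal.tsum_prod (f := fun m k => h (m + k))).symm
      _ = ∑' j : ℕ, (j + 1 : ℕ) * h j := tsum_prod_diag h
      _ = ∑' j : ℕ, ENNReal.ofReal (((j : ℝ) + 2) ^ (-σ)) := by
          refine tsum_congr fun j => ?_
          simp only [hhdef]
          have hj : ((j : ℝ) + 1) ≠ 0 := by positivity
          rw [← ENNReal.ofReal_natCast (j + 1),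
            ← ENNReal.ofReal_mul (by positivity)]
          congr 1
          push_cast
          rw [mul_comm, div_mul_cancel₀ _ hj]
  have key : 1 + A + B = Z := by
    rw [hA, hB, add_assoc, hAB, hq, hdiag, hZdef,
      tsum_eq_zero_add' (f := fun j : ℕ => ENNReal.ofReal (((j : ℝ) + 1) ^ (-σ)))
        ENNReal.summable]
    congr 1
    · simp [Real.one_rpow]
    · refine tsum_congr fun j => ?_
      have : ((j + 1 : ℕ) : ℝ) + 1 = (j : ℝ) + 2 := by push_cast; ring
      rw [this]
  -- finiteness
  have hzsum : Summable (fun j : ℕ => ((j : ℝ) + 1) ^ (-σ)) := by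
    have h1 : Summable (fun n : ℕ => (n : ℝ) ^ (-σ)) :=
      Real.summable_nat_rpow.mpr (by linarith)
    have h2 := h1.comp_injective Nat.succ_injective
    refine h2.congr fun j => ?_
    have hb' : ((j + 1 : ℕ) : ℝ) = (j : ℝ) + 1 := by push_cast; ring
    simp only [Function.comp_apply, Nat.succ_eq_add_one, hb']
  have hznn : ∀ j : ℕ, (0 : ℝ) ≤ ((j : ℝ) + 1) ^ (-σ) := by
    intro j
    have : (0:ℝ) ≤ (j : ℝ) + 1 := by positivity
    exact Real.rpow_nonneg this _
  have hZofReal : ENNReal.ofReal (zetaR σ) = Z := by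
    rw [zetaR, ENNReal.ofReal_tsum_of_nonneg hznn hzsum, hZdef]
  have hZfin : Z ≠ ∞ := by rw [← hZofReal]; exact ENNReal.ofReal_ne_top
  have hAfin : A ≠ ∞ := by
    refine ne_top_of_le_ne_top hZfin ?_
    calc A ≤ 1 + A := le_add_self
      _ ≤ 1 + A + B := le_self_add
      _ = Z := key
  have hBfin : B ≠ ∞ := by
    refine ne_top_of_le_ne_top hZfin ?_
    calc B ≤ 1 + A + B := le_add_self
      _ = Z := key
  -- conversion of the real sums, odd part
  have inner_nn1 : ∀ n m k : ℕ,
      (0:ℝ) ≤ ((k : ℝ) + ((m : ℝ) + 2)) ^ (-(2 * ((n : ℝ) + t) + 1)) :=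
    fun n m k => Real.rpow_nonneg (hbpos m k) _
  have inner_nn2 : ∀ n m k : ℕ,
      (0:ℝ) ≤ ((k : ℝ) + ((m : ℝ) + 2)) ^ (-(2 * ((n : ℝ) + t) + 2)) :=
    fun n m k => Real.rpow_nonneg (hbpos m k) _
  have hofR_hz1 : ∀ n m : ℕ,
      ENNReal.ofReal (hurwitzZetaSeries (2 * ((n : ℝ) + t) + 1) ((m : ℝ) + 2))
      = ∑' k : ℕ, ENNReal.ofReal (((k : ℝ) + ((m : ℝ) + 2)) ^ (-(2 * ((n : ℝ) + t) + 1))) := by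
    intro n m
    have hkfin : (∑' k : ℕ,
        ENNReal.ofReal (((k : ℝ) + ((m : ℝ) + 2)) ^ (-(2 * ((n : ℝ) + t) + 1)))) ≠ ∞ := by
      refine ne_top_of_le_ne_top hAfin ?_
      rw [hAdef]
      refine le_trans (ENNReal.le_tsum (f := fun m : ℕ => ∑' k : ℕ,
        ENNReal.ofReal (((k : ℝ) + ((m : ℝ) + 2)) ^ (-(2 * ((n : ℝ) + t) + 1)))) m) ?_
      exact ENNReal.le_tsum n
    have hksum := summable_of_ofReal_tsum_ne_top (inner_nn1 n m) hkfin
    rw [hurwitzZetaSeries, ENNReal.ofReal_tsum_of_nonneg (inner_nn1 n m) hksum]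
  have hofR_hz2 : ∀ n m : ℕ,
      ENNReal.ofReal (hurwitzZetaSeries (2 * ((n : ℝ) + t) + 2) ((m : ℝ) + 2))
      = ∑' k : ℕ, ENNReal.ofReal (((k : ℝ) + ((m : ℝ) + 2)) ^ (-(2 * ((n : ℝ) + t) + 2))) := by
    intro n m
    have hkfin : (∑' k : ℕ,
        ENNReal.ofReal (((k : ℝ) + ((m : ℝ) + 2)) ^ (-(2 * ((n : ℝ) + t) + 2)))) ≠ ∞ := by
      refine ne_top_of_le_ne_top hBfin ?_
      rw [hBdef]
      refine le_trans (ENNReal.le_tsum (f := fun m : ℕ => ∑' k : ℕ,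
        ENNReal.ofReal (((k : ℝ) + ((m : ℝ) + 2)) ^ (-(2 * ((n : ℝ) + t) + 2)))) m) ?_
      exact ENNReal.le_tsum n
    have hksum := summable_of_ofReal_tsum_ne_top (inner_nn2 n m) hkfin
    rw [hurwitzZetaSeries, ENNReal.ofReal_tsum_of_nonneg (inner_nn2 n m) hksum]
  have hhznn1 : ∀ n m : ℕ,
      (0:ℝ) ≤ hurwitzZetaSeries (2 * ((n : ℝ) + t) + 1) ((m : ℝ) + 2) := by
    intro n m; exact tsum_nonneg (inner_nn1 n m)
  have hhznn2 : ∀ n m : ℕ,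
      (0:ℝ) ≤ hurwitzZetaSeries (2 * ((n : ℝ) + t) + 2) ((m : ℝ) + 2) := by
    intro n m; exact tsum_nonneg (inner_nn2 n m)
  have hofR_m1 : ∀ n : ℕ,
      ENNReal.ofReal (∑' m : ℕ, hurwitzZetaSeries (2 * ((n : ℝ) + t) + 1) ((m : ℝ) + 2))
      = ∑' m : ℕ, ∑' k : ℕ,
          ENNReal.ofReal (((k : ℝ) + ((m : ℝ) + 2)) ^ (-(2 * ((n : ℝ) + t) + 1))) := by
    intro n
    have hmfin : (∑' m : ℕ, ∑' k : ℕ,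
        ENNReal.ofReal (((k : ℝ) + ((m : ℝ) + 2)) ^ (-(2 * ((n : ℝ) + t) + 1)))) ≠ ∞ := by
      refine ne_top_of_le_ne_top hAfin ?_
      rw [hAdef]
      exact ENNReal.le_tsum n
    have hmsum : Summable (fun m : ℕ =>
        hurwitzZetaSeries (2 * ((n : ℝ) + t) + 1) ((m : ℝ) + 2)) := by
      refine summable_of_ofReal_tsum_ne_top (hhznn1 n) ?_
      rw [tsum_congr (hofR_hz1 n)]; exact hmfin
    rw [ENNReal.ofReal_tsum_of_nonneg (hhznn1 n) hmsum]
    exact tsum_congr (hofR_hz1 n)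
  have hofR_m2 : ∀ n : ℕ,
      ENNReal.ofReal (∑' m : ℕ, hurwitzZetaSeries (2 * ((n : ℝ) + t) + 2) ((m : ℝ) + 2))
      = ∑' m : ℕ, ∑' k : ℕ,
          ENNReal.ofReal (((k : ℝ) + ((m : ℝ) + 2)) ^ (-(2 * ((n : ℝ) + t) + 2))) := by
    intro n
    have hmfin : (∑' m : ℕ, ∑' k : ℕ,
        ENNReal.ofReal (((k : ℝ) + ((m : ℝ) + 2)) ^ (-(2 * ((n : ℝ) + t) + 2)))) ≠ ∞ := by
      refine ne_top_of_le_ne_top hBfin ?_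
      rw [hBdef]
      exact ENNReal.le_tsum n
    have hmsum : Summable (fun m : ℕ =>
        hurwitzZetaSeries (2 * ((n : ℝ) + t) + 2) ((m : ℝ) + 2)) := by
      refine summable_of_ofReal_tsum_ne_top (hhznn2 n) ?_
      rw [tsum_congr (hofR_hz2 n)]; exact hmfin
    rw [ENNReal.ofReal_tsum_of_nonneg (hhznn2 n) hmsum]
    exact tsum_congr (hofR_hz2 n)
  have hmnn1 : ∀ n : ℕ, (0:ℝ) ≤ ∑' m : ℕ,
      hurwitzZetaSeries (2 * ((n : ℝ) + t) + 1) ((m : ℝ) + 2) :=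
    fun n => tsum_nonneg (hhznn1 n)
  have hmnn2 : ∀ n : ℕ, (0:ℝ) ≤ ∑' m : ℕ,
      hurwitzZetaSeries (2 * ((n : ℝ) + t) + 2) ((m : ℝ) + 2) :=
    fun n => tsum_nonneg (hhznn2 n)
  have hS1 : ENNReal.ofReal (∑' n : ℕ, ∑' m : ℕ,
      hurwitzZetaSeries (2 * ((n : ℝ) + t) + 1) ((m : ℝ) + 2)) = A := by
    have hnsum : Summable (fun n : ℕ => ∑' m : ℕ,
        hurwitzZetaSeries (2 * ((n : ℝ) + t) + 1) ((m : ℝ) + 2)) := by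
      refine summable_of_ofReal_tsum_ne_top hmnn1 ?_
      rw [tsum_congr hofR_m1]; exact hAfin
    rw [ENNReal.ofReal_tsum_of_nonneg hmnn1 hnsum, hAdef]
    exact tsum_congr hofR_m1
  have hS2 : ENNReal.ofReal (∑' n : ℕ, ∑' m : ℕ,
      hurwitzZetaSeries (2 * ((n : ℝ) + t) + 2) ((m : ℝ) + 2)) = B := by
    have hnsum : Summable (fun n : ℕ => ∑' m : ℕ,
        hurwitzZetaSeries (2 * ((n : ℝ) + t) + 2) ((m : ℝ) + 2)) := by
      refine summable_of_ofReal_tsum_ne_top hmnn2 ?_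
      rw [tsum_congr hofR_m2]; exact hBfin
    rw [ENNReal.ofReal_tsum_of_nonneg hmnn2 hnsum, hBdef]
    exact tsum_congr hofR_m2
  -- finish
  have hS1nn : (0:ℝ) ≤ ∑' n : ℕ, ∑' m : ℕ,
      hurwitzZetaSeries (2 * ((n : ℝ) + t) + 1) ((m : ℝ) + 2) := tsum_nonneg hmnn1
  have hS2nn : (0:ℝ) ≤ ∑' n : ℕ, ∑' m : ℕ,
      hurwitzZetaSeries (2 * ((n : ℝ) + t) + 2) ((m : ℝ) + 2) := tsum_nonneg hmnn2
  have hznn' : (0:ℝ) ≤ zetaR σ := tsum_nonneg hznn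
  have hfinal : ENNReal.ofReal (zetaR σ)
      = ENNReal.ofReal (1 + (∑' n : ℕ, ∑' m : ℕ,
          hurwitzZetaSeries (2 * ((n : ℝ) + t) + 1) ((m : ℝ) + 2))
        + ∑' n : ℕ, ∑' m : ℕ,
          hurwitzZetaSeries (2 * ((n : ℝ) + t) + 2) ((m : ℝ) + 2)) := by
    rw [ENNReal.ofReal_add (by linarith) hS2nn, ENNReal.ofReal_add (by norm_num) hS1nn,
      ENNReal.ofReal_one, hS1, hS2, key, hZofReal]
  exact (ENNReal.ofReal_eq_ofReal_iff hznn'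
    (by positivity)).mp hfinal
end
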